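/- Let H₁, H₂ be nonzero complex Hilbert spaces and let T ∈ B(H₂, H₁) with ‖T‖ ≤ 1. The Hilbert T₂-module H₁ ⊕ H₂ given by π_{(H₁,H₂,T)} is a semicogenerator if and only if T is not injective. -/

import Mathlib

set_option synthInstance.maxHeartbeats 1000000
set_option maxHeartbeats 2000000

noncomputable section

open Filter

open scoped ENNReal Matrix.Norms.L2Operator

variable (A : Type) [NonUnitalNormedRing A] [NormedSpace ℂ A]

/-- A Hilbert `A`-module structure on the Hilbert space `K`: a contractive algebra
homomorphism `π : A → B(K)` which is nondegenerate, i.e. the linear span of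
`{π a x : a ∈ A, x ∈ K}` is dense in `K`. -/
def IsHilbertRep {K : Type} [NormedAddCommGroup K] [InnerProductSpace ℂ K] [CompleteSpace K]
    (π : A →ₙₐ[ℂ] (K →L[ℂ] K)) : Prop :=
  (∀ a : A, ‖π a‖ ≤ ‖a‖) ∧
  Dense ((Submodule.span ℂ {x : K | ∃ (a : A) (y : K), π a y = x} : Submodule ℂ K) : Set K)

/-- A bounded `A`-module map between Hilbert `A`-modules. -/
def IsModuleMap {K L : Type} [NormedAddCommGroup K] [InnerProductSpace ℂ K]
    [NormedAddCommGroup L] [InnerProductSpace ℂ L]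
    (πK : A →ₙₐ[ℂ] (K →L[ℂ] K)) (πL : A →ₙₐ[ℂ] (L →L[ℂ] L)) (T : K →L[ℂ] L) : Prop :=
  ∀ (a : A) (x : K), T (πK a x) = πL a (T x)

/-- `H` is a semicogenerator: for every nonzero Hilbert `A`-module `K` there is a nonzero
bounded `A`-module map `K → H`. -/
def IsSemicogenerator {H : Type} [NormedAddCommGroup H] [InnerProductSpace ℂ H] [CompleteSpace H]
    (πH : A →ₙₐ[ℂ] (H →L[ℂ] H)) : Prop :=
  ∀ (K : Type) [NormedAddCommGroup K] [InnerProductSpace ℂ K] [CompleteSpace K],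
    ∀ (πK : A →ₙₐ[ℂ] (K →L[ℂ] K)), IsHilbertRep A πK → Nontrivial K →
      ∃ V : K →L[ℂ] H, IsModuleMap A πK πH V ∧ V ≠ 0

/-- The algebra of upper triangular `2 × 2` complex matrices, normed as operators
on the Euclidean space `ℂ²` (the `L²` operator norm). -/
def T2 : Subalgebra ℂ (Matrix (Fin 2) (Fin 2) ℂ) where
  carrier := {M | M 1 0 = 0}
  mul_mem' := by
    intro a b ha hb
    simp only [Set.mem_setOf_eq] at *
    simp [Matrix.mul_apply, Fin.sum_univ_two, ha, hb]
  add_mem' := by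
    intro a b ha hb
    simp only [Set.mem_setOf_eq] at *
    simp [ha, hb]
  algebraMap_mem' := by
    intro c
    simp [Matrix.algebraMap_eq_diagonal]

/-- The operator `(ζ, η) ↦ (a • ζ + b • (T η), c • η)` on `H₁ × H₂`. -/
def blockOp {H₁ H₂ : Type} [NormedAddCommGroup H₁] [InnerProductSpace ℂ H₁]
    [NormedAddCommGroup H₂] [InnerProductSpace ℂ H₂]
    (T : H₂ →L[ℂ] H₁) (a b c : ℂ) : (H₁ × H₂) →L[ℂ] (H₁ × H₂) :=
  (a • ContinuousLinearMap.fst ℂ H₁ H₂ +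
    b • T.comp (ContinuousLinearMap.snd ℂ H₁ H₂)).prod
    (c • ContinuousLinearMap.snd ℂ H₁ H₂)

variable {H₁ H₂ : Type} [NormedAddCommGroup H₁] [InnerProductSpace ℂ H₁]
  [NormedAddCommGroup H₂] [InnerProductSpace ℂ H₂]

theorem blockOp_apply (T : H₂ →L[ℂ] H₁) (a b c : ℂ) (x : H₁ × H₂) :
    blockOp T a b c x = (a • x.1 + b • T x.2, c • x.2) := rfl

theorem blockOp_mul (T : H₂ →L[ℂ] H₁) (a b c a' b' c' : ℂ) :
    (blockOp T a b c).comp (blockOp T a' b' c') =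
      blockOp T (a * a') (a * b' + b * c') (c * c') := by
  refine ContinuousLinearMap.ext fun x => Prod.ext ?_ ?_
  · simp [blockOp_apply, smul_smul, smul_add, add_smul]
    abel
  · simp [blockOp_apply, smul_smul]

theorem blockOp_add (T : H₂ →L[ℂ] H₁) (a b c a' b' c' : ℂ) :
    blockOp T (a + a') (b + b') (c + c') = blockOp T a b c + blockOp T a' b' c' := by
  refine ContinuousLinearMap.ext fun x => Prod.ext ?_ ?_
  · simp [blockOp_apply, add_smul]
    abel
  · simp [blockOp_apply, add_smul]

theorem blockOp_smul (T : H₂ →L[ℂ] H₁) (s a b c : ℂ) :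
    blockOp T (s * a) (s * b) (s * c) = s • blockOp T a b c := by
  refine ContinuousLinearMap.ext fun x => Prod.ext ?_ ?_
  · simp [blockOp_apply, smul_smul, smul_add]
  · simp [blockOp_apply, smul_smul]

theorem blockOp_zero (T : H₂ →L[ℂ] H₁) : blockOp T 0 0 0 = 0 := by
  refine ContinuousLinearMap.ext fun x => Prod.ext ?_ ?_ <;> simp [blockOp_apply]

/-- Conjugation of an operator on `H₁ × H₂` to the `L²`-direct sum `WithLp 2 (H₁ × H₂)`. -/
def prodL2Conj (X : (H₁ × H₂) →L[ℂ] (H₁ × H₂)) :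
    WithLp 2 (H₁ × H₂) →L[ℂ] WithLp 2 (H₁ × H₂) :=
  ((WithLp.prodContinuousLinearEquiv 2 ℂ H₁ H₂).symm.toContinuousLinearMap.comp X).comp
    (WithLp.prodContinuousLinearEquiv 2 ℂ H₁ H₂).toContinuousLinearMap

theorem prodL2Conj_add (X Y : (H₁ × H₂) →L[ℂ] (H₁ × H₂)) :
    prodL2Conj (X + Y) = prodL2Conj X + prodL2Conj Y := by
  unfold prodL2Conj
  rw [ContinuousLinearMap.comp_add, ContinuousLinearMap.add_comp]

theorem prodL2Conj_smul (s : ℂ) (X : (H₁ × H₂) →L[ℂ] (H₁ × H₂)) :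
    prodL2Conj (s • X) = s • prodL2Conj X := by
  unfold prodL2Conj
  rw [ContinuousLinearMap.comp_smul, ContinuousLinearMap.smul_comp]

theorem prodL2Conj_zero : prodL2Conj (0 : (H₁ × H₂) →L[ℂ] (H₁ × H₂)) = 0 := by
  unfold prodL2Conj
  rw [ContinuousLinearMap.comp_zero, ContinuousLinearMap.zero_comp]

theorem prodL2Conj_mul (X Y : (H₁ × H₂) →L[ℂ] (H₁ × H₂)) :
    prodL2Conj X * prodL2Conj Y = prodL2Conj (X.comp Y) := by
  ext x <;> simp [prodL2Conj, ContinuousLinearMap.mul_apply]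

/-- The representation `π_{(H₁,H₂,T)}` of `T2` on the Hilbert space direct sum `H₁ ⊕ H₂`
determined by a contraction `T : H₂ → H₁`: the upper triangular matrix `[[a, b], [0, c]]`
acts by `(ζ, η) ↦ (a ζ + b (T η), c η)`. -/
def triRep (T : H₂ →L[ℂ] H₁) :
    ↥T2 →ₙₐ[ℂ] (WithLp 2 (H₁ × H₂) →L[ℂ] WithLp 2 (H₁ × H₂)) where
  toFun M := prodL2Conj (blockOp T ((M : Matrix (Fin 2) (Fin 2) ℂ) 0 0)
    ((M : Matrix (Fin 2) (Fin 2) ℂ) 0 1) ((M : Matrix (Fin 2) (Fin 2) ℂ) 1 1))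
  map_add' M N := by
    have h : ((M + N : ↥T2) : Matrix (Fin 2) (Fin 2) ℂ)
        = (M : Matrix (Fin 2) (Fin 2) ℂ) + (N : Matrix (Fin 2) (Fin 2) ℂ) := rfl
    simp only [h, Matrix.add_apply, blockOp_add, prodL2Conj_add]
  map_smul' s M := by
    have h : ((s • M : ↥T2) : Matrix (Fin 2) (Fin 2) ℂ)
        = s • (M : Matrix (Fin 2) (Fin 2) ℂ) := rfl
    simp only [h, Matrix.smul_apply, smul_eq_mul, blockOp_smul, prodL2Conj_smul,
      RingHom.id_apply, MonoidHom.id_apply]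
  map_zero' := by
    have h : ((0 : ↥T2) : Matrix (Fin 2) (Fin 2) ℂ) = 0 := rfl
    simp only [h, Matrix.zero_apply, blockOp_zero, prodL2Conj_zero]
  map_mul' M N := by
    have hM : (M : Matrix (Fin 2) (Fin 2) ℂ) 1 0 = 0 := M.2
    have hN : (N : Matrix (Fin 2) (Fin 2) ℂ) 1 0 = 0 := N.2
    have hMN : ((M * N : ↥T2) : Matrix (Fin 2) (Fin 2) ℂ)
        = (M : Matrix (Fin 2) (Fin 2) ℂ) * (N : Matrix (Fin 2) (Fin 2) ℂ) := rfl
    have e00 : ((M * N : ↥T2) : Matrix (Fin 2) (Fin 2) ℂ) 0 0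
        = (M : Matrix (Fin 2) (Fin 2) ℂ) 0 0 * (N : Matrix (Fin 2) (Fin 2) ℂ) 0 0 := by
      simp [hMN, Matrix.mul_apply, Fin.sum_univ_two, hN]
    have e01 : ((M * N : ↥T2) : Matrix (Fin 2) (Fin 2) ℂ) 0 1
        = (M : Matrix (Fin 2) (Fin 2) ℂ) 0 0 * (N : Matrix (Fin 2) (Fin 2) ℂ) 0 1
          + (M : Matrix (Fin 2) (Fin 2) ℂ) 0 1 * (N : Matrix (Fin 2) (Fin 2) ℂ) 1 1 := by
      simp [hMN, Matrix.mul_apply, Fin.sum_univ_two]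
    have e11 : ((M * N : ↥T2) : Matrix (Fin 2) (Fin 2) ℂ) 1 1
        = (M : Matrix (Fin 2) (Fin 2) ℂ) 1 1 * (N : Matrix (Fin 2) (Fin 2) ℂ) 1 1 := by
      simp [hMN, Matrix.mul_apply, Fin.sum_univ_two, hM]
    simp only [e00, e01, e11, ← blockOp_mul, ← prodL2Conj_mul]

namespace TriAux

open scoped Matrix.Norms.L2Operator

lemma entry_le_norm (M : Matrix (Fin 2) (Fin 2) ℂ) (i j : Fin 2) : ‖M i j‖ ≤ ‖M‖ := by
  have h := M.l2_opNorm_mulVec (EuclideanSpace.single j 1)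
  rw [EuclideanSpace.norm_single, norm_one, mul_one] at h
  refine le_trans ?_ h
  have hv : ∀ k, ((EuclideanSpace.equiv (Fin 2) ℂ).symm
      (M.mulVec (EuclideanSpace.single j 1 : EuclideanSpace ℂ (Fin 2)))) k = M k j := by
    intro k
    show M.mulVec (EuclideanSpace.single j 1 : EuclideanSpace ℂ (Fin 2)) k = M k j
    simp [Matrix.mulVec, dotProduct, EuclideanSpace.single_apply, Finset.sum_ite_eq]
  rw [EuclideanSpace.norm_eq, Real.le_sqrt (norm_nonneg _)]
  · have hs := Finset.single_le_sum
      (f := fun k => ‖((EuclideanSpace.equiv (Fin 2) ℂ).symm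
        (M.mulVec (EuclideanSpace.single j 1 : EuclideanSpace ℂ (Fin 2)))) k‖ ^ 2)
      (fun k _ => sq_nonneg _) (Finset.mem_univ i)
    simpa [hv] using hs
  · positivity

def E11 : ↥T2 := ⟨!![1,0;0,0], by show !![(1:ℂ),0;0,0] 1 0 = 0; simp⟩
def E12 : ↥T2 := ⟨!![0,1;0,0], by show !![(0:ℂ),1;0,0] 1 0 = 0; simp⟩
def E22 : ↥T2 := ⟨!![0,0;0,1], by show !![(0:ℂ),0;0,1] 1 0 = 0; simp⟩

@[simp] lemma E11_coe : (E11 : Matrix (Fin 2) (Fin 2) ℂ) = !![1,0;0,0] := rfl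
@[simp] lemma E12_coe : (E12 : Matrix (Fin 2) (Fin 2) ℂ) = !![0,1;0,0] := rfl
@[simp] lemma E22_coe : (E22 : Matrix (Fin 2) (Fin 2) ℂ) = !![0,0;0,1] := rfl

lemma decomp (a : ↥T2) :
    a = (a : Matrix (Fin 2) (Fin 2) ℂ) 0 0 • E11 + (a : Matrix (Fin 2) (Fin 2) ℂ) 0 1 • E12
      + (a : Matrix (Fin 2) (Fin 2) ℂ) 1 1 • E22 := by
  have ha : (a : Matrix (Fin 2) (Fin 2) ℂ) 1 0 = 0 := a.2
  apply Subtype.ext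
  show (a : Matrix (Fin 2) (Fin 2) ℂ) = _
  ext i j
  fin_cases i <;> fin_cases j <;>
    simp [Matrix.add_apply, Matrix.smul_apply, ha]

lemma E22_mul (a : ↥T2) : E22 * a = (a : Matrix (Fin 2) (Fin 2) ℂ) 1 1 • E22 := by
  have ha : (a : Matrix (Fin 2) (Fin 2) ℂ) 1 0 = 0 := a.2
  apply Subtype.ext
  show (E22 : Matrix (Fin 2) (Fin 2) ℂ) * a = _
  ext i j
  fin_cases i <;> fin_cases j <;>
    simp [Matrix.mul_apply, Fin.sum_univ_two, Matrix.smul_apply, ha]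

lemma E11_mul (a : ↥T2) : E11 * a = (a : Matrix (Fin 2) (Fin 2) ℂ) 0 0 • E11
    + (a : Matrix (Fin 2) (Fin 2) ℂ) 0 1 • E12 := by
  apply Subtype.ext
  show (E11 : Matrix (Fin 2) (Fin 2) ℂ) * a = _
  ext i j
  fin_cases i <;> fin_cases j <;>
    simp [Matrix.mul_apply, Fin.sum_univ_two, Matrix.add_apply, Matrix.smul_apply]

lemma E12_mul_E22 : E12 * E22 = E12 := by
  apply Subtype.ext
  show (E12 : Matrix (Fin 2) (Fin 2) ℂ) * E22 = E12
  ext i j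
  fin_cases i <;> fin_cases j <;> simp [Matrix.mul_apply, Fin.sum_univ_two]

/-- The character `M ↦ M 1 1` of `T2`, acting on `ℂ`. -/
def charRep : ↥T2 →ₙₐ[ℂ] (ℂ →L[ℂ] ℂ) where
  toFun M := (1 : ℂ →L[ℂ] ℂ).smulRight ((M : Matrix (Fin 2) (Fin 2) ℂ) 1 1)
  map_add' M N := by
    have h : ((M + N : ↥T2) : Matrix (Fin 2) (Fin 2) ℂ)
        = (M : Matrix (Fin 2) (Fin 2) ℂ) + (N : Matrix (Fin 2) (Fin 2) ℂ) := rfl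
    ext
    simp [h, mul_add, smul_eq_mul]
  map_smul' s M := by
    have h : ((s • M : ↥T2) : Matrix (Fin 2) (Fin 2) ℂ)
        = s • (M : Matrix (Fin 2) (Fin 2) ℂ) := rfl
    ext
    simp [h, smul_eq_mul]
  map_zero' := by
    ext
    have h : ((0 : ↥T2) : Matrix (Fin 2) (Fin 2) ℂ) = 0 := rfl
    simp [h]
  map_mul' M N := by
    have hM : (M : Matrix (Fin 2) (Fin 2) ℂ) 1 0 = 0 := M.2
    have hMN : ((M * N : ↥T2) : Matrix (Fin 2) (Fin 2) ℂ)
        = (M : Matrix (Fin 2) (Fin 2) ℂ) * (N : Matrix (Fin 2) (Fin 2) ℂ) := rfl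
    have e11 : ((M * N : ↥T2) : Matrix (Fin 2) (Fin 2) ℂ) 1 1
        = (M : Matrix (Fin 2) (Fin 2) ℂ) 1 1 * (N : Matrix (Fin 2) (Fin 2) ℂ) 1 1 := by
      simp [hMN, Matrix.mul_apply, Fin.sum_univ_two, hM]
    ext
    simp [e11, smul_eq_mul, ContinuousLinearMap.mul_apply]
    ring

lemma charRep_apply (M : ↥T2) (x : ℂ) :
    charRep M x = x * (M : Matrix (Fin 2) (Fin 2) ℂ) 1 1 := by
  show (1 : ℂ →L[ℂ] ℂ).smulRight ((M : Matrix (Fin 2) (Fin 2) ℂ) 1 1) x = _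
  simp [smul_eq_mul]

lemma charRep_contr (a : ↥T2) : ‖charRep a‖ ≤ ‖a‖ := by
  have h1 : ‖charRep a‖ = ‖(a : Matrix (Fin 2) (Fin 2) ℂ) 1 1‖ := by
    show ‖(1 : ℂ →L[ℂ] ℂ).smulRight ((a : Matrix (Fin 2) (Fin 2) ℂ) 1 1)‖ = _
    rw [ContinuousLinearMap.norm_smulRight_apply]
    simp
  rw [h1]
  exact entry_le_norm _ 1 1

lemma charRep_dense : Dense ((Submodule.span ℂ
    {x : ℂ | ∃ (a : ↥T2) (y : ℂ), charRep a y = x} : Submodule ℂ ℂ) : Set ℂ) := by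
  have hset : {x : ℂ | ∃ (a : ↥T2) (y : ℂ), charRep a y = x} = Set.univ := by
    refine Set.eq_univ_of_forall fun x => ⟨1, x, ?_⟩
    rw [charRep_apply]
    have h1 : ((1 : ↥T2) : Matrix (Fin 2) (Fin 2) ℂ) 1 1 = 1 := by simp
    simp [h1]
  rw [hset, Submodule.span_univ]
  simp [dense_univ]

end TriAux

namespace TriAux

lemma prodL2Conj_apply (X : (H₁ × H₂) →L[ℂ] (H₁ × H₂)) (y : WithLp 2 (H₁ × H₂)) :
    prodL2Conj X y = (WithLp.prodContinuousLinearEquiv 2 ℂ H₁ H₂).symm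
      (X ((WithLp.prodContinuousLinearEquiv 2 ℂ H₁ H₂) y)) := rfl

lemma triRep_apply (T : H₂ →L[ℂ] H₁) (a : ↥T2) :
    triRep T a = prodL2Conj (blockOp T ((a : Matrix (Fin 2) (Fin 2) ℂ) 0 0)
      ((a : Matrix (Fin 2) (Fin 2) ℂ) 0 1) ((a : Matrix (Fin 2) (Fin 2) ℂ) 1 1)) := rfl

end TriAux

/-- The Hilbert `T2`-module `H₁ ⊕ H₂` given by `π_(H₁,H₂,T)` is a semicogenerator if and only if `T` is not injective. -/
theorem triRep_semicogenerator_iff [CompleteSpace H₁] [CompleteSpace H₂]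
    [Nontrivial H₁] [Nontrivial H₂]
    (T : H₂ →L[ℂ] H₁) (hT : ‖T‖ ≤ 1) :
    IsSemicogenerator ↥T2 (triRep T) ↔ ¬Function.Injective ⇑T := by
  set e := WithLp.prodContinuousLinearEquiv 2 ℂ H₁ H₂ with he
  constructor
  · -- semicogenerator → T not injective
    intro hsemi hinj
    obtain ⟨V, hV, hVne⟩ := hsemi ℂ TriAux.charRep
      ⟨fun a => TriAux.charRep_contr a, TriAux.charRep_dense⟩ inferInstance
    have h1 := hV TriAux.E11 1
    have h2 := hV TriAux.E12 1
    rw [TriAux.charRep_apply] at h1 h2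
    simp only [TriAux.E11_coe, TriAux.E12_coe] at h1 h2
    norm_num at h1 h2
    rw [TriAux.triRep_apply, TriAux.prodL2Conj_apply] at h1 h2
    simp only [TriAux.E11_coe, TriAux.E12_coe] at h1 h2
    norm_num [blockOp_apply] at h1 h2
    -- extract components
    have h1'' : ((V 1).1.1, (0 : H₂)) = (0 : H₁ × H₂) := by
      simpa using congrArg (WithLp.equiv 2 (H₁ × H₂)) h1.symm
    have h2'' : (T (V 1).1.2, (0 : H₂)) = (0 : H₁ × H₂) := by
      simpa using congrArg (WithLp.equiv 2 (H₁ × H₂)) h2.symm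
    have hfst : (V 1).1.1 = 0 := congrArg Prod.fst h1''
    have hsnd : (V 1).1.2 = 0 := hinj (by simpa using congrArg Prod.fst h2'')
    have hV1 : V 1 = 0 := by
      apply (WithLp.equiv 2 (H₁ × H₂)).injective
      apply Prod.ext
      · simpa using hfst
      · simpa using hsnd
    apply hVne
    ext
    rw [hV1]
    rfl
  · -- T not injective → semicogenerator
    intro hinj K _ _ _ πK hrep hK
    obtain ⟨η, hTη, hη⟩ : ∃ η : H₂, T η = 0 ∧ η ≠ 0 := by
      rw [Function.not_injective_iff] at hinj
      obtain ⟨a, b, hab, hne⟩ := hinj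
      exact ⟨a - b, by rw [map_sub, hab, sub_self], sub_ne_zero.mpr hne⟩
    by_cases h22 : πK TriAux.E22 = 0
    · -- second projection acts as zero: use E11 and a vector of H₁
      have h12 : πK TriAux.E12 = 0 := by
        rw [← TriAux.E12_mul_E22, map_mul, h22, mul_zero]
      have h11 : πK TriAux.E11 ≠ 0 := by
        intro h11
        have hall : ∀ a : ↥T2, πK a = 0 := by
          intro a
          rw [TriAux.decomp a, map_add, map_add, map_smul, map_smul, map_smul,
            h11, h12, h22]
          simp
        have hsp : (Submodule.span ℂ {x : K | ∃ a y, πK a y = x}) = ⊥ := by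
          rw [Submodule.span_eq_bot]
          rintro x ⟨a, y, rfl⟩
          rw [hall a]
          rfl
        have hd := hrep.2
        rw [hsp] at hd
        have hcl : closure (({0} : Set K)) = ({0} : Set K) :=
          isClosed_singleton.closure_eq
        obtain ⟨x, y, hxy⟩ := hK.exists_pair_ne
        have hz : ∀ z : K, z = 0 := by
          intro z
          have hzc : z ∈ closure ((⊥ : Submodule ℂ K) : Set K) := by
            rw [hd.closure_eq]; trivial
          rw [Submodule.bot_coe, hcl] at hzc
          simpa using hzc
        exact hxy ((hz x).trans (hz y).symm)
      obtain ⟨x₀, hx₀⟩ : ∃ x₀, πK TriAux.E11 x₀ ≠ 0 := by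
        by_contra hc
        push_neg at hc
        exact h11 (ContinuousLinearMap.ext fun x => by simpa using hc x)
      obtain ⟨ξ, hξ⟩ := exists_ne (0 : H₁)
      set B := πK TriAux.E11 with hB
      set U : K →L[ℂ] H₁ := ((innerSL ℂ (B x₀)).comp B).smulRight ξ with hU
      set V : K →L[ℂ] WithLp 2 (H₁ × H₂) :=
        e.symm.toContinuousLinearMap.comp (U.prod (0 : K →L[ℂ] H₂)) with hVdef
      have hVap : ∀ y : K, V y = e.symm (U y, 0) := fun y => rfl
      have hUa : ∀ (a : ↥T2) (x : K),
          U (πK a x) = (a : Matrix (Fin 2) (Fin 2) ℂ) 0 0 • U x := by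
        intro a x
        have h := congrArg (fun g : K →L[ℂ] K => g x) (map_mul πK TriAux.E11 a)
        rw [TriAux.E11_mul, map_add, map_smul, map_smul, h12] at h
        simp only [ContinuousLinearMap.mul_apply, ContinuousLinearMap.add_apply,
          ContinuousLinearMap.smul_apply, ContinuousLinearMap.zero_apply, smul_zero,
          add_zero] at h
        -- h : B (πK a x) = a00 • B x
        rw [hU]
        simp only [ContinuousLinearMap.smulRight_apply, ContinuousLinearMap.comp_apply,
          innerSL_apply_apply]
        rw [← h, inner_smul_right, smul_smul]
      refine ⟨V, ?_, ?_⟩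
      · intro a x
        rw [TriAux.triRep_apply, TriAux.prodL2Conj_apply, hVap, hVap,
          ContinuousLinearEquiv.apply_symm_apply, blockOp_apply]
        congr 1
        refine Prod.ext ?_ ?_
        · show U (πK a x) = _
          rw [hUa]
          simp [hTη]
        · show (0 : H₂) = _
          simp
      · intro h0
        have hz : V x₀ = 0 := by rw [h0]; rfl
        have : U x₀ = 0 := by
          have h := congrArg e hz
          rw [hVap, ContinuousLinearEquiv.apply_symm_apply, map_zero] at h
          exact congrArg Prod.fst h
        rw [hU] at this
        simp only [ContinuousLinearMap.smulRight_apply, ContinuousLinearMap.comp_apply,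
          innerSL_apply_apply] at this
        rcases smul_eq_zero.mp this with h | h
        · exact hx₀ (inner_self_eq_zero.mp h)
        · exact hξ h
    · -- πK E22 ≠ 0 : use a kernel vector of T
      obtain ⟨x₀, hx₀⟩ : ∃ x₀, πK TriAux.E22 x₀ ≠ 0 := by
        by_contra hc
        push_neg at hc
        exact h22 (ContinuousLinearMap.ext fun x => by simpa using hc x)
      set A := πK TriAux.E22 with hA
      set W : K →L[ℂ] H₂ := ((innerSL ℂ (A x₀)).comp A).smulRight η with hW
      set V : K →L[ℂ] WithLp 2 (H₁ × H₂) :=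
        e.symm.toContinuousLinearMap.comp ((0 : K →L[ℂ] H₁).prod W) with hVdef
      have hVap : ∀ y : K, V y = e.symm (0, W y) := fun y => rfl
      have hWa : ∀ (a : ↥T2) (x : K),
          W (πK a x) = (a : Matrix (Fin 2) (Fin 2) ℂ) 1 1 • W x := by
        intro a x
        have h := congrArg (fun g : K →L[ℂ] K => g x) (map_mul πK TriAux.E22 a)
        rw [TriAux.E22_mul, map_smul] at h
        simp only [ContinuousLinearMap.mul_apply, ContinuousLinearMap.smul_apply] at h
        -- h : a11 • A x = A (πK a x)
        rw [hW]
        simp only [ContinuousLinearMap.smulRight_apply, ContinuousLinearMap.comp_apply,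
          innerSL_apply_apply]
        rw [← h, inner_smul_right, smul_smul]
      have hTW : ∀ x : K, T (W x) = 0 := by
        intro x
        rw [hW]
        simp only [ContinuousLinearMap.smulRight_apply, ContinuousLinearMap.comp_apply,
          innerSL_apply_apply, map_smul, hTη, smul_zero]
      refine ⟨V, ?_, ?_⟩
      · intro a x
        rw [TriAux.triRep_apply, TriAux.prodL2Conj_apply, hVap, hVap,
          ContinuousLinearEquiv.apply_symm_apply, blockOp_apply]
        congr 1
        refine Prod.ext ?_ ?_
        · show (0 : H₁) = _
          simp [hTW]
        · show W (πK a x) = _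
          rw [hWa]
      · intro h0
        have hz : V x₀ = 0 := by rw [h0]; rfl
        have : W x₀ = 0 := by
          have h := congrArg e hz
          rw [hVap, ContinuousLinearEquiv.apply_symm_apply, map_zero] at h
          exact congrArg Prod.snd h
        rw [hW] at this
        simp only [ContinuousLinearMap.smulRight_apply, ContinuousLinearMap.comp_apply,
          innerSL_apply_apply] at this
        rcases smul_eq_zero.mp this with h | h
        · exact hx₀ (inner_self_eq_zero.mp h)
        · exact hη h
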